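/- Let E = ℂ³ and fix pairwise linearly independent nonzero vectors v₀, v₁, v₂ ∈ E and 2-dimensional subspaces W₀, W₁, W₂ with v_i ∈ W_i, all in general position (any two of the W_i intersect in a line, v_i ∉ W_j for i ≠ j, and the three lines W_i ∩ W_j are distinct from each other and from the lines ℂv_i). Define three filtrations on E: for i = 1,2, E^i(j) = E for j ≤ −1, W_i for j = 0, ℂv_i for j = 1, 0 for j > 1; and E⁰(j) = E for j ≤ 0, W₀ for j = 1, ℂv₀ for j = 2, 0 for j > 2. Equip S²E with the induced symmetric-power filtrations (S²E)^ρ(j) = ∑_{j₁+j₂=j} image of E^ρ(j₁) ⊗ E^ρ(j₂). Then the intersection (S²E)⁰(1) ∩ (S²E)¹(0) ∩ (S²E)²(0) is one-dimensional. -/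

import Mathlib

/-- The linear polynomial on `ℂ³` associated to a vector `w`, identifying
`E = ℂ³` with linear forms and `S²E` with products of two linear forms. -/
noncomputable def lin3 (w : Fin 3 → ℂ) : MvPolynomial (Fin 3) ℂ :=
  ∑ i, MvPolynomial.C (w i) * MvPolynomial.X i

/-- The basis vectors `v₀, v₁, v₂` of `ℂ³`. -/
noncomputable def vv (i : Fin 3) : Fin 3 → ℂ := Pi.single i 1

/-- The general-position planes `W₀, W₁, W₂` with `vᵢ ∈ Wᵢ`. -/
noncomputable def WW : Fin 3 → Submodule ℂ (Fin 3 → ℂ) :=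
  ![Submodule.span ℂ {vv 0, vv 1 + vv 2},
    Submodule.span ℂ {vv 1, vv 2 + vv 0},
    Submodule.span ℂ {vv 2, vv 0 + vv 1}]

/-- The three Klyachko filtrations on `E = ℂ³`. -/
noncomputable def EFil3 : Fin 3 → ℤ → Submodule ℂ (Fin 3 → ℂ) :=
  ![fun j => if j ≤ 0 then ⊤ else if j = 1 then WW 0
      else if j = 2 then Submodule.span ℂ {vv 0} else ⊥,
    fun j => if j ≤ -1 then ⊤ else if j = 0 then WW 1
      else if j = 1 then Submodule.span ℂ {vv 1} else ⊥,
    fun j => if j ≤ -1 then ⊤ else if j = 0 then WW 2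
      else if j = 1 then Submodule.span ℂ {vv 2} else ⊥]

/-- The induced filtration on `S²E`:
`(S²E)^ρ(j) = ∑_{j₁+j₂=j} E^ρ(j₁)·E^ρ(j₂)`. -/
noncomputable def S2Fil (ρ : Fin 3) (j : ℤ) : Submodule ℂ (MvPolynomial (Fin 3) ℂ) :=
  ⨆ p : {p : ℤ × ℤ // p.1 + p.2 = j},
    Submodule.span ℂ
      {q | ∃ x ∈ EFil3 ρ p.1.1, ∃ y ∈ EFil3 ρ p.1.2, q = lin3 x * lin3 y}

/-! ### Auxiliary machinery -/

/-- Evaluation at a point as a linear functional. -/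
noncomputable def ev (a : Fin 3 → ℂ) : MvPolynomial (Fin 3) ℂ →ₗ[ℂ] ℂ :=
  (MvPolynomial.aeval a).toLinearMap

lemma ev_lin3_mul (a x y : Fin 3 → ℂ) :
    ev a (lin3 x * lin3 y) =
      (x 0 * a 0 + x 1 * a 1 + x 2 * a 2) * (y 0 * a 0 + y 1 * a 1 + y 2 * a 2) := by
  simp [ev, lin3, Fin.sum_univ_three]

noncomputable def Kd (i j : Fin 3) : Submodule ℂ (Fin 3 → ℂ) :=
  LinearMap.ker ((LinearMap.proj i : (Fin 3 → ℂ) →ₗ[ℂ] ℂ) - LinearMap.proj j)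

noncomputable def Kz (i : Fin 3) : Submodule ℂ (Fin 3 → ℂ) :=
  LinearMap.ker (LinearMap.proj i : (Fin 3 → ℂ) →ₗ[ℂ] ℂ)

lemma mem_Kd {i j : Fin 3} {x : Fin 3 → ℂ} : x ∈ Kd i j ↔ x i = x j := by
  simp [Kd, LinearMap.mem_ker, sub_eq_zero]

lemma mem_Kz {i : Fin 3} {x : Fin 3 → ℂ} : x ∈ Kz i ↔ x i = 0 := by
  simp [Kz, LinearMap.mem_ker]

lemma hF0 : ∀ j : ℤ, 1 ≤ j → EFil3 0 j ≤ Kd 1 2 := by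
  intro j hj
  simp only [EFil3, Matrix.cons_val_zero]
  split_ifs with h1 h2 h3
  · omega
  · simp only [WW, Matrix.cons_val_zero]
    rw [Submodule.span_le]
    rintro x (rfl | rfl) <;> simp [mem_Kd, vv, Pi.single_apply]
  · rw [Submodule.span_le]
    rintro x rfl
    simp [mem_Kd, vv, Pi.single_apply]
  · exact bot_le

lemma hF1a : ∀ j : ℤ, 0 ≤ j → EFil3 1 j ≤ Kd 0 2 := by
  intro j hj
  simp only [EFil3, Matrix.cons_val_one, Matrix.head_cons, Matrix.cons_val_zero]
  split_ifs with h1 h2 h3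
  · omega
  · simp only [WW, Matrix.cons_val_one, Matrix.head_cons, Matrix.cons_val_zero]
    rw [Submodule.span_le]
    rintro x (rfl | rfl) <;> simp [mem_Kd, vv, Pi.single_apply]
  · rw [Submodule.span_le]
    rintro x rfl
    simp [mem_Kd, vv, Pi.single_apply]
  · exact bot_le

lemma hF1b : ∀ j : ℤ, 1 ≤ j → EFil3 1 j ≤ Kz 0 ⊓ Kz 2 := by
  intro j hj
  simp only [EFil3, Matrix.cons_val_one, Matrix.head_cons, Matrix.cons_val_zero]
  split_ifs with h1 h2 h3
  · omega
  · omega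
  · rw [Submodule.span_le]
    rintro x rfl
    simp [Submodule.mem_inf, mem_Kz, vv, Pi.single_apply]
  · exact bot_le

lemma hF2a : ∀ j : ℤ, 0 ≤ j → EFil3 2 j ≤ Kd 0 1 := by
  intro j hj
  simp only [EFil3, Matrix.cons_val_two, Matrix.tail_cons, Matrix.head_cons]
  split_ifs with h1 h2 h3
  · omega
  · simp only [WW, Matrix.cons_val_two, Matrix.tail_cons, Matrix.head_cons]
    rw [Submodule.span_le]
    rintro x (rfl | rfl) <;> simp [mem_Kd, vv, Pi.single_apply]
  · rw [Submodule.span_le]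
    rintro x rfl
    simp [mem_Kd, vv, Pi.single_apply]
  · exact bot_le

lemma hF2b : ∀ j : ℤ, 1 ≤ j → EFil3 2 j ≤ Kz 0 ⊓ Kz 1 := by
  intro j hj
  simp only [EFil3, Matrix.cons_val_two, Matrix.tail_cons, Matrix.head_cons]
  split_ifs with h1 h2 h3
  · omega
  · omega
  · rw [Submodule.span_le]
    rintro x rfl
    simp [Submodule.mem_inf, mem_Kz, vv, Pi.single_apply]
  · exact bot_le

lemma S2A_le : S2Fil 0 1 ≤ LinearMap.ker (ev ![0,1,-1]) := by
  refine iSup_le ?_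
  rintro ⟨⟨p1, p2⟩, hp⟩
  rw [Submodule.span_le]
  rintro q ⟨x, hx, y, hy, rfl⟩
  have key : x 1 = x 2 ∨ y 1 = y 2 := by
    rcases le_or_gt 1 p1 with h | h
    · exact Or.inl (mem_Kd.mp (hF0 p1 h hx))
    · exact Or.inr (mem_Kd.mp (hF0 p2 (by omega) hy))
  simp only [SetLike.mem_coe, LinearMap.mem_ker, ev_lin3_mul]
  rcases key with h | h <;> rw [h] <;>
    simp [Matrix.cons_val_zero, Matrix.cons_val_one, Matrix.head_cons]

lemma S2B_le : S2Fil 1 0 ≤ LinearMap.ker (ev ![1,0,-1]) ⊓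
    LinearMap.ker (ev ![2,0,0] - ev ![1,0,-1] - ev ![1,0,1]) := by
  refine iSup_le ?_
  rintro ⟨⟨p1, p2⟩, hp⟩
  rw [Submodule.span_le]
  rintro q ⟨x, hx, y, hy, rfl⟩
  have key : (x 0 = x 2 ∧ y 0 = y 2) ∨ (x 0 = 0 ∧ x 2 = 0) ∨ (y 0 = 0 ∧ y 2 = 0) := by
    rcases lt_trichotomy p1 0 with h | h | h
    · refine Or.inr (Or.inr ?_)
      have := hF1b p2 (by omega) hy
      rw [Submodule.mem_inf, mem_Kz, mem_Kz] at this
      exact this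
    · subst h
      have h2 : p2 = 0 := by omega
      subst h2
      exact Or.inl ⟨mem_Kd.mp (hF1a 0 le_rfl hx), mem_Kd.mp (hF1a 0 le_rfl hy)⟩
    · refine Or.inr (Or.inl ?_)
      have := hF1b p1 (by omega) hx
      rw [Submodule.mem_inf, mem_Kz, mem_Kz] at this
      exact this
  simp only [SetLike.mem_coe, Submodule.mem_inf, LinearMap.mem_ker, LinearMap.sub_apply,
    ev_lin3_mul]
  constructor <;>
  · rcases key with ⟨h1, h2⟩ | ⟨h1, h2⟩ | ⟨h1, h2⟩ <;> rw [h1, h2] <;>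
      simp [Matrix.cons_val_zero, Matrix.cons_val_one, Matrix.head_cons] <;> ring

lemma S2C_le : S2Fil 2 0 ≤ LinearMap.ker (ev ![1,-1,0]) ⊓
    LinearMap.ker (ev ![2,0,0] - ev ![1,-1,0] - ev ![1,1,0]) := by
  refine iSup_le ?_
  rintro ⟨⟨p1, p2⟩, hp⟩
  rw [Submodule.span_le]
  rintro q ⟨x, hx, y, hy, rfl⟩
  have key : (x 0 = x 1 ∧ y 0 = y 1) ∨ (x 0 = 0 ∧ x 1 = 0) ∨ (y 0 = 0 ∧ y 1 = 0) := by
    rcases lt_trichotomy p1 0 with h | h | h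
    · refine Or.inr (Or.inr ?_)
      have := hF2b p2 (by omega) hy
      rw [Submodule.mem_inf, mem_Kz, mem_Kz] at this
      exact this
    · subst h
      have h2 : p2 = 0 := by omega
      subst h2
      exact Or.inl ⟨mem_Kd.mp (hF2a 0 le_rfl hx), mem_Kd.mp (hF2a 0 le_rfl hy)⟩
    · refine Or.inr (Or.inl ?_)
      have := hF2b p1 (by omega) hx
      rw [Submodule.mem_inf, mem_Kz, mem_Kz] at this
      exact this
  simp only [SetLike.mem_coe, Submodule.mem_inf, LinearMap.mem_ker, LinearMap.sub_apply,
    ev_lin3_mul]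
  constructor <;>
  · rcases key with ⟨h1, h2⟩ | ⟨h1, h2⟩ | ⟨h1, h2⟩ <;> rw [h1, h2] <;>
      simp [Matrix.cons_val_zero, Matrix.cons_val_one, Matrix.head_cons] <;> ring

open MvPolynomial in
/-- The span of degree-two monomials. -/
noncomputable def QQ : Submodule ℂ (MvPolynomial (Fin 3) ℂ) :=
  Submodule.span ℂ (Set.range fun p : Fin 3 × Fin 3 => X p.1 * X p.2)

open MvPolynomial in
lemma lin3_mul_expand (x y : Fin 3 → ℂ) :
    lin3 x * lin3 y = ∑ p : Fin 3 × Fin 3, (x p.1 * y p.2) • (X p.1 * X p.2) := by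
  rw [lin3, lin3, Finset.sum_mul_sum, Fintype.sum_prod_type]
  refine Finset.sum_congr rfl fun i _ => Finset.sum_congr rfl fun j _ => ?_
  rw [smul_eq_C_mul, C_mul]
  ring

lemma S2_le_QQ (ρ : Fin 3) (j : ℤ) : S2Fil ρ j ≤ QQ := by
  refine iSup_le ?_
  rintro ⟨⟨p1, p2⟩, hp⟩
  rw [Submodule.span_le]
  rintro q ⟨x, hx, y, hy, rfl⟩
  rw [SetLike.mem_coe, lin3_mul_expand]
  exact Submodule.sum_mem _ fun p _ =>
    Submodule.smul_mem _ _ (Submodule.subset_span ⟨p, rfl⟩)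

open MvPolynomial in
lemma ev_XX (a : Fin 3 → ℂ) (i j : Fin 3) : ev a (X i * X j) = a i * a j := by
  simp [ev]

open MvPolynomial in
lemma lin3_one : lin3 (fun _ => (1:ℂ)) = X 0 + X 1 + X 2 := by
  simp [lin3, Fin.sum_univ_three]

open MvPolynomial in
lemma key_alg (c : Fin 3 × Fin 3 → ℂ)
    (hA : ev ![0,1,-1] (∑ p : Fin 3 × Fin 3, c p • (X p.1 * X p.2)) = 0)
    (hB1 : ev ![1,0,-1] (∑ p : Fin 3 × Fin 3, c p • (X p.1 * X p.2)) = 0)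
    (hB2 : (ev ![2,0,0] - ev ![1,0,-1] - ev ![1,0,1])
      (∑ p : Fin 3 × Fin 3, c p • (X p.1 * X p.2)) = 0)
    (hC1 : ev ![1,-1,0] (∑ p : Fin 3 × Fin 3, c p • (X p.1 * X p.2)) = 0)
    (hC2 : (ev ![2,0,0] - ev ![1,-1,0] - ev ![1,1,0])
      (∑ p : Fin 3 × Fin 3, c p • (X p.1 * X p.2)) = 0) :
    c (0,0) • (lin3 (fun _ => 1) * lin3 (fun _ => 1)) =
      ∑ p : Fin 3 × Fin 3, c p • (X p.1 * X p.2) := by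
  simp only [LinearMap.sub_apply, map_sum, map_add, map_smul, ev_XX, sq, Fintype.sum_prod_type,
    Fin.sum_univ_three, Matrix.cons_val_zero, Matrix.cons_val_one, Matrix.head_cons,
    Matrix.cons_val_two, Matrix.tail_cons, smul_eq_mul] at hA hB1 hB2 hC1 hC2
  have h11 : c (1,1) = c (0,0) := by linear_combination -hC2/2
  have h22 : c (2,2) = c (0,0) := by linear_combination -hB2/2
  have h01 : c (0,1) + c (1,0) = 2 * c (0,0) := by linear_combination -hC1 + h11
  have h02 : c (0,2) + c (2,0) = 2 * c (0,0) := by linear_combination -hB1 + h22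
  have h12 : c (1,2) + c (2,1) = 2 * c (0,0) := by linear_combination -hA + h11 + h22
  have H11 : (C (c (1,1)) : MvPolynomial (Fin 3) ℂ) = C (c (0,0)) := congrArg C h11
  have H22 : (C (c (2,2)) : MvPolynomial (Fin 3) ℂ) = C (c (0,0)) := congrArg C h22
  have H01 : (C (c (0,1)) + C (c (1,0)) : MvPolynomial (Fin 3) ℂ) = 2 * C (c (0,0)) := by
    rw [← C_add, h01, C_mul, map_ofNat]
  have H02 : (C (c (0,2)) + C (c (2,0)) : MvPolynomial (Fin 3) ℂ) = 2 * C (c (0,0)) := by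
    rw [← C_add, h02, C_mul, map_ofNat]
  have H12 : (C (c (1,2)) + C (c (2,1)) : MvPolynomial (Fin 3) ℂ) = 2 * C (c (0,0)) := by
    rw [← C_add, h12, C_mul, map_ofNat]
  rw [lin3_one]
  simp only [Fintype.sum_prod_type, Fin.sum_univ_three, smul_eq_C_mul]
  linear_combination (-(X 1 * X 1 : MvPolynomial (Fin 3) ℂ)) * H11 - (X 2 * X 2) * H22 -
    (X 0 * X 1) * H01 - (X 0 * X 2) * H02 - (X 1 * X 2) * H12

lemma one_eq_sum : (fun _ => (1:ℂ)) = vv 0 + (vv 1 + vv 2) := by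
  funext i
  fin_cases i <;> simp [vv, Pi.single_apply]

lemma u_mem_WW (i : Fin 3) : (fun _ => (1:ℂ)) ∈ WW i := by
  have key : ∀ a b : Fin 3 → ℂ, (fun _ => (1:ℂ)) = a + b →
      (fun _ => (1:ℂ)) ∈ Submodule.span ℂ {a, b} := by
    intro a b hab
    rw [hab]
    exact Submodule.add_mem _ (Submodule.subset_span (Set.mem_insert _ _))
      (Submodule.subset_span (Set.mem_insert_of_mem _ rfl))
  fin_cases i <;>
    exact key _ _ (by funext j; fin_cases j <;> simp [vv, Pi.single_apply])

lemma u_mem_inf :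
    lin3 (fun _ => 1) * lin3 (fun _ => 1) ∈ S2Fil 0 1 ⊓ S2Fil 1 0 ⊓ S2Fil 2 0 := by
  refine ⟨⟨?_, ?_⟩, ?_⟩
  · refine Submodule.mem_iSup_of_mem (⟨(1, 0), by norm_num⟩ : {p : ℤ × ℤ // p.1 + p.2 = 1}) ?_
    refine Submodule.subset_span ⟨fun _ => 1, ?_, fun _ => 1, ?_, rfl⟩
    · simpa only [EFil3, Matrix.cons_val_zero, if_neg (by norm_num : ¬ (1:ℤ) ≤ 0),
        if_pos rfl, if_true] using u_mem_WW 0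
    · simp [EFil3]
  · refine Submodule.mem_iSup_of_mem (⟨(0, 0), by norm_num⟩ : {p : ℤ × ℤ // p.1 + p.2 = 0}) ?_
    refine Submodule.subset_span ⟨fun _ => 1, ?_, fun _ => 1, ?_, rfl⟩ <;>
      simpa only [EFil3, Matrix.cons_val_one, Matrix.head_cons, Matrix.cons_val_zero,
        if_neg (by norm_num : ¬ (0:ℤ) ≤ -1), if_pos rfl, if_true] using u_mem_WW 1
  · refine Submodule.mem_iSup_of_mem (⟨(0, 0), by norm_num⟩ : {p : ℤ × ℤ // p.1 + p.2 = 0}) ?_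
    refine Submodule.subset_span ⟨fun _ => 1, ?_, fun _ => 1, ?_, rfl⟩ <;>
      simpa only [EFil3, Matrix.cons_val_two, Matrix.tail_cons, Matrix.head_cons,
        if_neg (by norm_num : ¬ (0:ℤ) ≤ -1), if_pos rfl, if_true] using u_mem_WW 2

lemma u_sq_ne_zero : lin3 (fun _ => 1) * lin3 (fun _ => 1) ≠ 0 := by
  intro h
  have h9 := ev_lin3_mul (fun _ => 1) (fun _ => 1) (fun _ => 1)
  rw [h, map_zero] at h9
  norm_num at h9

/-- The intersection `(S²E)⁰(1) ∩ (S²E)¹(0) ∩ (S²E)²(0)` is one-dimensional. -/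
theorem stmt12 :
    Module.finrank ℂ ((S2Fil 0 1 ⊓ S2Fil 1 0 ⊓ S2Fil 2 0) :
      Submodule ℂ (MvPolynomial (Fin 3) ℂ)) = 1 := by
  have hEq : (S2Fil 0 1 ⊓ S2Fil 1 0 ⊓ S2Fil 2 0 :
      Submodule ℂ (MvPolynomial (Fin 3) ℂ)) =
      Submodule.span ℂ {lin3 (fun _ => 1) * lin3 (fun _ => 1)} := by
    refine le_antisymm ?_ ?_
    · intro q hq
      obtain ⟨⟨hqA, hqB⟩, hqC⟩ := hq
      have hQ : q ∈ QQ := S2_le_QQ 0 1 hqA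
      rw [QQ, Submodule.mem_span_range_iff_exists_fun] at hQ
      obtain ⟨c, hc⟩ := hQ
      have eA : ev ![0,1,-1] q = 0 := LinearMap.mem_ker.mp (S2A_le hqA)
      obtain ⟨eB1, eB2⟩ := Submodule.mem_inf.mp (S2B_le hqB)
      obtain ⟨eC1, eC2⟩ := Submodule.mem_inf.mp (S2C_le hqC)
      rw [LinearMap.mem_ker] at eB1 eB2 eC1 eC2
      rw [← hc] at eA eB1 eB2 eC1 eC2
      rw [Submodule.mem_span_singleton]
      exact ⟨c (0, 0), (key_alg c eA eB1 eB2 eC1 eC2).trans hc⟩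
    · rw [Submodule.span_le, Set.singleton_subset_iff]
      exact u_mem_inf
  rw [hEq]
  exact finrank_span_singleton u_sq_ne_zero
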